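/- arXiv:1409.8405 — 3 statements merged into one kernel-verified Lean document; each statement's English description precedes it below -/
import Mathlib

section
/- Let 𝔥 = 𝔥_{-l} ⊕ ⋯ ⊕ 𝔥_l be a |l|-graded semisimple Lie algebra with Killing form B, and θ a Cartan involution with θ(𝔥_i) = 𝔥_{-i}. Then the metric B_θ(X,Y) = -B(X, θ(Y)) is admissible: for every g in the connected subgroup Q with Lie algebra 𝔮 = 𝔥_0 ⊕ 𝔥_+, the B_θ-adjoint of Ad_g equals θ ∘ Ad_{g^{-1}} ∘ θ, and consequently conditions Ad_g^*([Z,W]) = [(Ad_g^-)^*(Z), Ad_g^*(W)] (Z ∈ 𝔥_-, W ∈ 𝔥) and (Ad_g^-)^*([Z,W]) = [(Ad_g^-)^*(Z),(Ad_g^-)^*(W)] (Z,W ∈ 𝔥_-) hold. -/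
/-!
Statement 5: Let `𝔥 = 𝔥_{-l} ⊕ ⋯ ⊕ 𝔥_l` be an `|l|`-graded semisimple Lie algebra with
Killing form `B` and Cartan involution `θ` with `θ(𝔥_i) = 𝔥_{-i}`, so that
`B_θ(X,Y) = -B(X, θY)` is a positive definite metric adapted to the gradation. Then for
every `g` in the group `Q` (acting by filtration-preserving automorphisms, with Lie
algebra `𝔮 = 𝔥_0 ⊕ 𝔥_+`), the `B_θ`-adjoint of `Ad_g` equals `θ ∘ Ad_{g⁻¹} ∘ θ`, and
the admissibility conditions
`Ad_g^*⁅Z,W⁆ = ⁅(Ad_g^-)^* Z, Ad_g^* W⁆` (`Z ∈ 𝔥_-`, `W ∈ 𝔥`) and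
`(Ad_g^-)^*⁅Z,W⁆ = ⁅(Ad_g^-)^* Z, (Ad_g^-)^* W⁆` (`Z, W ∈ 𝔥_-`) hold.
-/

private lemma biSup_induction_aux {R M : Type*} [Semiring R] [AddCommMonoid M] [Module R M]
    (p : ℤ → Prop) (h : ℤ → Submodule R M) {C : M → Prop} {x : M}
    (hx : x ∈ ⨆ j, ⨆ _ : p j, h j)
    (mem : ∀ j, p j → ∀ y ∈ h j, C y) (zero : C 0)
    (add : ∀ y z, C y → C z → C (y + z)) : C x := by
  refine Submodule.iSup_induction (motive := C) (fun j => ⨆ _ : p j, h j) hx (fun j y hy => ?_) zero add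
  have hy' : y ∈ ⨆ _ : p j, h j := hy
  by_cases hpj : p j
  · rw [iSup_pos hpj] at hy'; exact mem j hpj y hy'
  · rw [iSup_neg hpj] at hy'
    simp only [Submodule.mem_bot] at hy'
    exact hy' ▸ zero

theorem semisimple_standard_metric_admissible
    {L Q : Type*} [LieRing L] [LieAlgebra ℝ L] [FiniteDimensional ℝ L]
    [LieAlgebra.IsSemisimple ℝ L] [Group Q]
    (l : ℕ) (h : ℤ → Submodule ℝ L)
    (hint : DirectSum.IsInternal h)
    (hbound : ∀ i : ℤ, (i < -(l : ℤ) ∨ (l : ℤ) < i) → h i = ⊥)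
    (hbkt : ∀ i j : ℤ, ∀ x ∈ h i, ∀ y ∈ h j, ⁅x, y⁆ ∈ h (i + j))
    -- the Cartan involution `θ`, compatible with the gradation:
    (θ : L ≃ₗ[ℝ] L)
    (hθLie : ∀ x y : L, θ ⁅x, y⁆ = ⁅θ x, θ y⁆)
    (hθinvol : ∀ x : L, θ (θ x) = x)
    (hθgr : ∀ i : ℤ, ∀ x ∈ h i, θ x ∈ h (-i))
    -- `B_θ = -B(·, θ·)` is positive definite (Cartan involution property):
    (hpos : ∀ x : L, x ≠ 0 → 0 < -(killingForm ℝ L x (θ x)))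
    -- `𝔥_-` and bracket-closedness:
    (Hneg : Submodule ℝ L) (hHneg : Hneg = ⨆ i < (0 : ℤ), h i)
    (hcl : ∀ x y : Hneg, ⁅(x : L), (y : L)⁆ ∈ Hneg)
    -- `Q` acts by filtration-preserving Lie algebra automorphisms preserving `B`:
    (AdL : Q → L ≃ₗ[ℝ] L)
    (hAdhom : ∀ (g₁ g₂ : Q) (x : L), AdL (g₁ * g₂) x = AdL g₁ (AdL g₂ x))
    (hAdLie : ∀ (g : Q) (x y : L), AdL g ⁅x, y⁆ = ⁅AdL g x, AdL g y⁆)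
    (hAdFil : ∀ (g : Q) (i : ℤ), ∀ x ∈ (⨆ j ≥ i, h j), AdL g x ∈ (⨆ j ≥ i, h j))
    (hBinv : ∀ (g : Q) (x y : L),
      killingForm ℝ L (AdL g x) (AdL g y) = killingForm ℝ L x y)
    -- the induced action `Ad^-` of `Q` on `𝔥_- ≅ 𝔥/𝔮` and its `B_θ`-adjoint:
    (Adm : Q → (Hneg →ₗ[ℝ] Hneg))
    (hAdm : ∀ (g : Q) (x : Hneg), (AdL g x : L) - (Adm g x : L) ∈ (⨆ j ≥ (0 : ℤ), h j))
    (AdmStar : Q → (Hneg →ₗ[ℝ] Hneg))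
    (hAdmStar : ∀ (g : Q) (x y : Hneg),
      -(killingForm ℝ L (Adm g x : L) (θ (y : L))) =
        -(killingForm ℝ L (x : L) (θ (AdmStar g y : L)))) :
    -- (a) the `B_θ`-adjoint of `Ad_g` is `θ ∘ Ad_{g⁻¹} ∘ θ`:
    (∀ (g : Q) (x y : L),
        -(killingForm ℝ L (AdL g x) (θ y)) =
          -(killingForm ℝ L x (θ (θ (AdL g⁻¹ (θ y)))))) ∧
      -- (b) condition (1): `Ad_g^*⁅Z,W⁆ = ⁅(Ad_g^-)^* Z, Ad_g^* W⁆`: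
      (∀ (g : Q) (Z : Hneg) (W : L),
        θ (AdL g⁻¹ (θ ⁅(Z : L), W⁆)) = ⁅(AdmStar g Z : L), θ (AdL g⁻¹ (θ W))⁆) ∧
      -- (c) condition (2): `(Ad_g^-)^*⁅Z,W⁆ = ⁅(Ad_g^-)^* Z, (Ad_g^-)^* W⁆`:
      (∀ (g : Q) (Z W : Hneg),
        (AdmStar g ⟨⁅(Z : L), (W : L)⁆, hcl Z W⟩ : L) =
          ⁅(AdmStar g Z : L), (AdmStar g W : L)⁆) := by
  -- basic facts about the group action
  have hAd1 : ∀ x : L, AdL 1 x = x := by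
    intro x
    have h1 := hAdhom 1 1 x
    rw [one_mul] at h1
    exact ((AdL 1).injective h1).symm
  have hAdinv : ∀ (g : Q) (x : L), AdL g (AdL g⁻¹ x) = x := by
    intro g x
    have h1 := hAdhom g g⁻¹ x
    rw [mul_inv_cancel, hAd1] at h1
    exact h1.symm
  have hadj : ∀ (g : Q) (x y : L),
      killingForm ℝ L (AdL g x) y = killingForm ℝ L x (AdL g⁻¹ y) := by
    intro g x y
    conv_lhs => rw [← hAdinv g y]
    rw [hBinv]
  -- filtration facts
  have hFmem : ∀ (i j : ℤ), i ≤ j → ∀ x ∈ h j, x ∈ (⨆ k ≥ i, h k) := fun i j hij x hx =>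
    Submodule.mem_iSup_of_mem j (Submodule.mem_iSup_of_mem hij hx)
  have hFtop : (⨆ j ≥ -(l : ℤ), h j) = ⊤ := by
    refine le_antisymm le_top ?_
    rw [← hint.submodule_iSup_eq_top]
    refine iSup_le fun i => ?_
    by_cases hi : -(l : ℤ) ≤ i
    · exact fun x hx => hFmem _ _ hi x hx
    · rw [hbound i (Or.inl (by omega))]; exact bot_le
  have hFbot : (⨆ j ≥ (l : ℤ) + 1, h j) = ⊥ := by
    refine le_antisymm (iSup₂_le fun j hj => ?_) bot_le
    rw [hbound j (Or.inr (by omega))]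
  have hbkF : ∀ (a b : ℤ) (x y : L), x ∈ (⨆ j ≥ a, h j) → y ∈ (⨆ j ≥ b, h j) →
      ⁅x, y⁆ ∈ (⨆ j ≥ a + b, h j) := by
    intro a b x y hx hy
    refine biSup_induction_aux (C := fun x => ⁅x, y⁆ ∈ (⨆ j ≥ a + b, h j)) _ h hx
      (fun i hi x' hx' => ?_) (by simp)
      (fun u v hu hv => by show ⁅u + v, y⁆ ∈ _; rw [add_lie]; exact add_mem hu hv)
    refine biSup_induction_aux (C := fun y' => ⁅x', y'⁆ ∈ (⨆ j ≥ a + b, h j)) _ h hy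
      (fun j hj y' hy' => ?_) (by simp)
      (fun u v hu hv => by show ⁅x', u + v⁆ ∈ _; rw [lie_add]; exact add_mem hu hv)
    exact hFmem _ _ (by omega) _ (hbkt i j _ hx' _ hy')
  -- orthogonality via nilpotency of the grading-shifting operator
  have horth : ∀ u v : L, u ∈ (⨆ j ≥ (0 : ℤ), h j) → v ∈ (⨆ j ≥ (1 : ℤ), h j) →
      killingForm ℝ L u v = 0 := by
    intro u v hu hv
    rw [killingForm_apply_apply]
    set f : L →ₗ[ℝ] L := (LieAlgebra.ad ℝ L u) ∘ₗ (LieAlgebra.ad ℝ L v) with hf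
    have hstep : ∀ (k : ℤ) (x : L), x ∈ (⨆ j ≥ k, h j) → f x ∈ (⨆ j ≥ k + 1, h j) := by
      intro k x hx
      have h2 : ⁅u, ⁅v, x⁆⁆ ∈ (⨆ j ≥ 0 + (1 + k), h j) := hbkF _ _ _ _ hu (hbkF 1 k v x hv hx)
      have harith : (0 : ℤ) + (1 + k) = k + 1 := by ring
      rw [harith] at h2
      simpa only [hf, LinearMap.comp_apply, LieAlgebra.ad_apply] using h2
    have hpow : ∀ (n : ℕ) (x : L), (f ^ n) x ∈ (⨆ j ≥ -(l : ℤ) + (n : ℤ), h j) := by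
      intro n
      induction n with
      | zero =>
        intro x
        have hx : x ∈ (⨆ j ≥ -(l : ℤ), h j) := hFtop ▸ Submodule.mem_top
        simpa using hx
      | succ n ih =>
        intro x
        have harith : -(l : ℤ) + ((n + 1 : ℕ) : ℤ) = (-(l : ℤ) + (n : ℤ)) + 1 := by
          push_cast; ring
        rw [pow_succ', Module.End.mul_apply, harith]
        exact hstep _ _ (ih x)
    have hnil : f ^ (2 * l + 1) = 0 := by
      ext x
      have hx := hpow (2 * l + 1) x
      have harith : -(l : ℤ) + ((2 * l + 1 : ℕ) : ℤ) = (l : ℤ) + 1 := by push_cast; ring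
      rw [harith, hFbot] at hx
      simpa using hx
    have hnil' : IsNilpotent (LinearMap.trace ℝ L f) :=
      LinearMap.isNilpotent_trace_of_isNilpotent ⟨2 * l + 1, hnil⟩
    exact hnil'.eq_zero
  -- θ exchanges `𝔥_-` and the positive part of the filtration
  have hθneg : ∀ z : L, z ∈ Hneg → θ z ∈ (⨆ j ≥ (1 : ℤ), h j) := by
    intro z hz
    rw [hHneg] at hz
    refine biSup_induction_aux (C := fun z => θ z ∈ (⨆ j ≥ (1 : ℤ), h j)) _ h hz
      (fun i hi y hy => ?_) (by simp)
      (fun u v hu hv => by show θ (u + v) ∈ _; rw [map_add]; exact add_mem hu hv)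
    exact hFmem _ _ (by omega) _ (hθgr i y hy)
  have hθpos : ∀ z : L, z ∈ (⨆ j ≥ (1 : ℤ), h j) → θ z ∈ Hneg := by
    intro z hz
    rw [hHneg]
    refine biSup_induction_aux (C := fun z => θ z ∈ (⨆ i < (0 : ℤ), h i)) _ h hz
      (fun j hj y hy => ?_) (by simp)
      (fun u v hu hv => by show θ (u + v) ∈ _; rw [map_add]; exact add_mem hu hv)
    exact Submodule.mem_iSup_of_mem (-j) (Submodule.mem_iSup_of_mem (by omega) (hθgr j y hy))
  have hT : ∀ (g : Q) (z : L), z ∈ Hneg → θ (AdL g⁻¹ (θ z)) ∈ Hneg := fun g z hz =>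
    hθpos _ (hAdFil g⁻¹ 1 _ (hθneg z hz))
  -- the key identity: the `B_θ`-adjoint restricted to `𝔥_-` is `AdmStar`
  have hkey : ∀ (g : Q) (z : Hneg), θ (AdL g⁻¹ (θ (z : L))) = (AdmStar g z : L) := by
    intro g z
    have hdmem : θ (AdL g⁻¹ (θ (z : L))) - (AdmStar g z : L) ∈ Hneg :=
      sub_mem (hT g _ z.2) (AdmStar g z).2
    have hzero : ∀ x : L, x ∈ Hneg →
        killingForm ℝ L x (θ (θ (AdL g⁻¹ (θ (z : L))) - (AdmStar g z : L))) = 0 := by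
      intro x hx
      have e1 : killingForm ℝ L x (θ (θ (AdL g⁻¹ (θ (z : L))))) =
          killingForm ℝ L (AdL g x) (θ (z : L)) := by
        rw [hθinvol]; exact (hadj g x (θ (z : L))).symm
      have e3 : killingForm ℝ L (AdL g x) (θ (z : L)) =
          killingForm ℝ L (Adm g ⟨x, hx⟩ : L) (θ (z : L)) := by
        have h0 : killingForm ℝ L (AdL g x - (Adm g ⟨x, hx⟩ : L)) (θ (z : L)) = 0 :=
          horth _ _ (hAdm g ⟨x, hx⟩) (hθneg _ z.2)
        rw [LinearMap.map_sub₂] at h0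
        exact sub_eq_zero.mp h0
      have e4 : killingForm ℝ L (Adm g ⟨x, hx⟩ : L) (θ (z : L)) =
          killingForm ℝ L x (θ (AdmStar g z : L)) :=
        neg_inj.mp (hAdmStar g ⟨x, hx⟩ z)
      rw [map_sub, map_sub, e1, e3, e4, sub_self]
    have hd0 : θ (AdL g⁻¹ (θ (z : L))) - (AdmStar g z : L) = 0 := by
      by_contra hne
      have hlt := hpos _ hne
      rw [hzero _ hdmem] at hlt
      norm_num at hlt
    exact sub_eq_zero.mp hd0
  -- the adjoint is a Lie algebra homomorphism
  have hTlie : ∀ (g : Q) (x y : L),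
      θ (AdL g⁻¹ (θ ⁅x, y⁆)) = ⁅θ (AdL g⁻¹ (θ x)), θ (AdL g⁻¹ (θ y))⁆ := by
    intro g x y
    rw [hθLie, hAdLie, hθLie]
  refine ⟨?_, ?_, ?_⟩
  · intro g x y
    rw [hθinvol]
    exact congrArg Neg.neg (hadj g x (θ y))
  · intro g Z W
    rw [hTlie, hkey g Z]
  · intro g Z W
    rw [← hkey g ⟨⁅(Z : L), (W : L)⁆, hcl Z W⟩]
    show θ (AdL g⁻¹ (θ ⁅(Z : L), (W : L)⁆)) = _
    rw [hTlie, hkey g Z, hkey g W]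
end

section
/- Let 𝔤 = 𝔤_{-k} ⊕ ⋯ ⊕ 𝔤_0 be a fundamental non-positively graded Lie algebra and 𝔤* its coadjoint 𝔤_--module. For l ≥ 1, let γ ∈ C^1_l(𝔤_-, 𝔤*) satisfy ∂_{𝔤*}(γ) = 0 (i.e. γ([X,Y]) = γ(X)∘ad_Y − γ(Y)∘ad_X for X,Y ∈ 𝔤_-) and γ|_{𝔤_{-1}} = ∂_{𝔤*}(β)|_{𝔤_{-1}} for some β ∈ (𝔤_{-l})*, where ∂_{𝔤*}(β)(X) = −β([X,·]). Then γ = ∂_{𝔤*}(β) on all of 𝔤_-. -/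
/-!
Statement 11: Let `𝔤` be a fundamental non-positively graded Lie algebra and `𝔤^*` its
coadjoint `𝔤_-`-module. For `l ≥ 1`, if `γ ∈ C^1_l(𝔤_-, 𝔤^*)` satisfies `∂_{𝔤^*} γ = 0`
and `γ` agrees on `𝔤_{-1}` with the coboundary `∂_{𝔤^*} β` of some `β ∈ (𝔤_{-l})^*`,
then `γ = ∂_{𝔤^*} β` on all of `𝔤_-`.
-/

variable {G : Type*} [LieRing G] [LieAlgebra ℝ G]

/-- The coadjoint action `L_X(α) = -α ∘ ad_X` of `𝔤_-` on `𝔤^*`. -/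
noncomputable def coadAct (x : G) (η : G →ₗ[ℝ] ℝ) : G →ₗ[ℝ] ℝ :=
  -(η ∘ₗ (LieAlgebra.ad ℝ G x))

/-- The dual piece `(𝔤^*)_i = (𝔤_{-i})^*` inside `𝔤^*`. -/
noncomputable def dualPiece (gr : ℤ → Submodule ℝ G) (i : ℤ) :
    Submodule ℝ (G →ₗ[ℝ] ℝ) :=
  ⨅ j ∈ {j : ℤ | j ≠ -i}, Submodule.dualAnnihilator (gr j)

theorem cocycle_coboundary_determined_on_generators
    (gr : ℤ → Submodule ℝ G)
    (hnonpos : ∀ i : ℤ, 0 < i → gr i = ⊥)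
    (hbkt : ∀ i j : ℤ, ∀ x ∈ gr i, ∀ y ∈ gr j, ⁅x, y⁆ ∈ gr (i + j))
    (hint : DirectSum.IsInternal gr)
    -- fundamentality: for `i < -1`, `𝔤_i = [𝔤_{-1}, 𝔤_{i+1}]`:
    (hfund : ∀ i : ℤ, i < -1 → ∀ x ∈ gr i,
      x ∈ Submodule.span ℝ {z : G | ∃ u ∈ gr (-1), ∃ v ∈ gr (i + 1), z = ⁅u, v⁆})
    (l : ℤ) (hl : 1 ≤ l)
    -- `γ` is a `1`-cochain of homogeneous degree `l` with values in `𝔤^*`: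
    (γ : G →ₗ[ℝ] (G →ₗ[ℝ] ℝ))
    (hdeg : ∀ i : ℤ, ∀ x ∈ gr i, γ x ∈ dualPiece gr (i + l))
    -- `∂_{𝔤^*} γ = 0`, i.e. `γ([X,Y]) = γ(X)∘ad_Y − γ(Y)∘ad_X` on `𝔤_-`:
    (hco : ∀ x ∈ (⨆ i < (0 : ℤ), gr i), ∀ y ∈ (⨆ i < (0 : ℤ), gr i),
      γ ⁅x, y⁆ = coadAct x (γ y) - coadAct y (γ x))
    -- `β ∈ (𝔤_{-l})^*`, and `γ = ∂_{𝔤^*} β` on `𝔤_{-1}` (`∂_{𝔤^*}β(X) = −β([X,·]) = L_X β`):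
    (β : G →ₗ[ℝ] ℝ) (hβ : β ∈ dualPiece gr l)
    (hrestr : ∀ x ∈ gr (-1), γ x = coadAct x β) :
    ∀ x ∈ (⨆ i < (0 : ℤ), gr i), γ x = coadAct x β := by
  -- basic facts about coadAct
  have happ : ∀ (x : G) (η : G →ₗ[ℝ] ℝ) (z : G), coadAct x η z = -η ⁅x, z⁆ := by
    intro x η z; simp [coadAct, LieAlgebra.ad_apply]
  have hzero : coadAct (0 : G) β = 0 := by
    ext z; simp [happ]
  have hadd : ∀ a b : G, coadAct (a + b) β = coadAct a β + coadAct b β := by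
    intro a b; ext z; simp [happ]; ring
  have hsmul : ∀ (c : ℝ) (a : G), coadAct (c • a) β = c • coadAct a β := by
    intro c a; ext z; simp [happ]
  have hbr : ∀ u v : G,
      coadAct ⁅u, v⁆ β = coadAct u (coadAct v β) - coadAct v (coadAct u β) := by
    intro u v; ext z
    simp only [LinearMap.sub_apply, happ, lie_lie, map_sub]
    ring
  -- inclusion of pieces in the negative part
  have hle : ∀ i : ℤ, i < 0 → gr i ≤ ⨆ i < (0 : ℤ), gr i := by
    intro i hi
    exact le_iSup₂ (f := fun i (_ : i < (0:ℤ)) => gr i) i hi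
  -- induction on depth
  have key : ∀ n : ℕ, ∀ x ∈ gr (-(n + 1) : ℤ), γ x = coadAct x β := by
    intro n
    induction n with
    | zero => intro x hx; exact hrestr x (by norm_num at hx ⊢; exact hx)
    | succ n ih =>
      intro x hx
      have hi : (-(↑n + 1 + 1) : ℤ) < -1 := by omega
      have hsp := hfund _ hi x hx
      refine Submodule.span_induction ?_ ?_ ?_ ?_ hsp
      · rintro z ⟨u, hu, v, hv, rfl⟩
        have hv' : v ∈ gr (-(n + 1) : ℤ) := by
          have : (-(↑n + 1 + 1) + 1 : ℤ) = -(↑n + 1) := by ring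
          rwa [this] at hv
        have hu' : u ∈ ⨆ i < (0 : ℤ), gr i := hle (-1) (by norm_num) hu
        have hv'' : v ∈ ⨆ i < (0 : ℤ), gr i := by
          refine hle (-(↑n + 1)) (by omega) hv'
        rw [hco u hu' v hv'', hrestr u hu, ih v hv', hbr]
      · simp [hzero]
      · intro a b _ _ ha hb
        rw [map_add, ha, hb, hadd]
      · intro c a _ ha
        rw [map_smul, ha, hsmul]
  -- conclude via induction on the supremum
  intro x hx
  rw [show (⨆ i < (0 : ℤ), gr i) = ⨆ i : ℤ, ⨆ _ : i < 0, gr i from rfl] at hx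
  refine Submodule.iSup_induction (fun i : ℤ => ⨆ _ : i < (0:ℤ), gr i)
    (motive := fun x => γ x = coadAct x β) hx ?_ ?_ ?_
  · intro i y hy
    by_cases hi : i < 0
    · simp only [iSup_pos hi] at hy
      have : i = -(((-i - 1).toNat : ℤ) + 1) := by omega
      exact key (-i - 1).toNat y (by rwa [← this])
    · simp only [iSup_neg hi] at hy
      simp only [Submodule.mem_bot] at hy
      simp [hy, hzero]
  · simp [hzero]
  · intro a b ha hb
    rw [map_add, ha, hb, hadd]
end

section
/- Let 𝔤 = 𝔤_{-k} ⊕ ⋯ ⊕ 𝔤_0 be a fundamental non-positively graded Lie algebra. For l = 1, the restriction map induces an isomorphism H^1_1(𝔤_-, 𝔤*) ≅ Hom(𝔤_{-1}, (𝔤_0)*)/B_1(𝔤), where B_1(𝔤) = { β̂ : β ∈ (𝔤_{-1})* } and β̂(X)(Z) = −β([X,Z]) for X ∈ 𝔤_{-1}, Z ∈ 𝔤_0. In particular, every linear map 𝔤_{-1} → (𝔤_0)* extends (trivially on 𝔤_{≤-2}) to a ∂_{𝔤*}-closed 1-cochain of homogeneous degree 1. -/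
/-!
Statement 12: Let `𝔤` be a fundamental non-positively graded Lie algebra. The
restriction map induces an isomorphism
`H^1_1(𝔤_-, 𝔤^*) ≅ Hom(𝔤_{-1}, (𝔤_0)^*) / B_1(𝔤)`, where
`B_1(𝔤) = {β̂ : β ∈ (𝔤_{-1})^*}` and `β̂(X)(Z) = −β([X,Z])`.
In particular every linear map `𝔤_{-1} → (𝔤_0)^*` extends, trivially on `𝔤_{≤ -2}`,
to a `∂_{𝔤^*}`-closed `1`-cochain of homogeneous degree `1`; and a closed degree-one
cochain restricts to an element of `B_1(𝔤)` on `𝔤_{-1}` precisely when it is a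
coboundary on all of `𝔤_-`.  (These two facts express surjectivity and kernel
identification for the map induced by restriction, i.e. the isomorphism.)
-/

variable {G : Type*} [LieRing G] [LieAlgebra ℝ G]

lemma coadAct_apply (x : G) (η : G →ₗ[ℝ] ℝ) (z : G) :
    coadAct x η z = -η ⁅x, z⁆ := rfl

lemma coadAct_zero (x : G) : coadAct x (0 : G →ₗ[ℝ] ℝ) = 0 := by
  ext z; simp [coadAct_apply]

lemma coadAct_sub (x : G) (η θ : G →ₗ[ℝ] ℝ) :
    coadAct x (η - θ) = coadAct x η - coadAct x θ := by
  ext z; simp [coadAct_apply]; ring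

lemma mem_dualPiece_apply {gr : ℤ → Submodule ℝ G} {i j : ℤ} {η : G →ₗ[ℝ] ℝ}
    (hη : η ∈ dualPiece gr i) (hj : j ≠ -i) {z : G} (hz : z ∈ gr j) : η z = 0 := by
  have h1 := (Submodule.mem_iInf _).mp hη j
  have h2 := (Submodule.mem_iInf _).mp h1 hj
  exact (Submodule.mem_dualAnnihilator η).mp h2 z hz

lemma coad_vanish (gr : ℤ → Submodule ℝ G)
    (hnonpos : ∀ i : ℤ, 0 < i → gr i = ⊥)
    (hbkt : ∀ i j : ℤ, ∀ x ∈ gr i, ∀ y ∈ gr j, ⁅x, y⁆ ∈ gr (i + j))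
    (hint : DirectSum.IsInternal gr)
    {i d : ℤ} (hd : 0 < -d - i)
    {x : G} (hx : x ∈ gr i) {η : G →ₗ[ℝ] ℝ} (hη : η ∈ dualPiece gr d) :
    coadAct x η = 0 := by
  have htop : (⊤ : Submodule ℝ G) ≤ LinearMap.ker (coadAct x η) := by
    rw [← hint.submodule_iSup_eq_top]
    refine iSup_le fun m => fun z hz => LinearMap.mem_ker.mpr ?_
    rw [coadAct_apply]
    by_cases hm : m = -d - i
    · have hz0 : z = 0 := by rw [hm, hnonpos _ hd] at hz; exact hz
      simp [hz0]
    · have hb : ⁅x, z⁆ ∈ gr (i + m) := hbkt i m x hx z hz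
      rw [mem_dualPiece_apply hη (by omega) hb, neg_zero]
  ext z
  simpa using htop (Submodule.mem_top (x := z))

lemma bilin_vanish (gr : ℤ → Submodule ℝ G) (B : G →ₗ[ℝ] G →ₗ[ℝ] (G →ₗ[ℝ] ℝ))
    (h : ∀ i < (0:ℤ), ∀ x ∈ gr i, ∀ j < (0:ℤ), ∀ y ∈ gr j, B x y = 0) :
    ∀ x ∈ (⨆ i < (0:ℤ), gr i), ∀ y ∈ (⨆ i < (0:ℤ), gr i), B x y = 0 := by
  intro x hx y hy
  have h1 : ∀ i < (0:ℤ), ∀ x' ∈ gr i, B x' y = 0 := by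
    intro i hi x' hx'
    have hle : (⨆ j < (0:ℤ), gr j) ≤ LinearMap.ker (B x') :=
      iSup₂_le fun j hj => fun z hz => LinearMap.mem_ker.mpr (h i hi x' hx' j hj z hz)
    exact hle hy
  have hle : (⨆ i < (0:ℤ), gr i) ≤ LinearMap.ker (B.flip y) :=
    iSup₂_le fun i hi => fun z hz => LinearMap.mem_ker.mpr (h1 i hi z hz)
  simpa using hle hx

noncomputable def defect (γ : G →ₗ[ℝ] (G →ₗ[ℝ] ℝ)) : G →ₗ[ℝ] G →ₗ[ℝ] (G →ₗ[ℝ] ℝ) :=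
  LinearMap.mk₂ ℝ (fun x y => γ ⁅x, y⁆ - (coadAct x (γ y) - coadAct y (γ x)))
    (fun x x' y => by ext z; simp [coadAct_apply, add_lie, lie_add]; ring)
    (fun c x y => by ext z; simp [coadAct_apply, smul_lie, lie_smul]; ring)
    (fun x y y' => by ext z; simp [coadAct_apply, add_lie, lie_add]; ring)
    (fun c x y => by ext z; simp [coadAct_apply, smul_lie, lie_smul]; ring)

lemma defect_apply (γ : G →ₗ[ℝ] (G →ₗ[ℝ] ℝ)) (x y : G) :
    defect γ x y = γ ⁅x, y⁆ - (coadAct x (γ y) - coadAct y (γ x)) := rfl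

noncomputable def projNegOne (gr : ℤ → Submodule ℝ G) (hint : DirectSum.IsInternal gr) :
    G →ₗ[ℝ] G :=
  (gr (-1)).subtype ∘ₗ (DirectSum.component ℝ ℤ (fun i => ↥(gr i)) (-1)) ∘ₗ
    (LinearEquiv.ofBijective (DirectSum.coeLinearMap gr) hint).symm.toLinearMap

lemma projNegOne_of_mem_same (gr : ℤ → Submodule ℝ G) (hint : DirectSum.IsInternal gr)
    {x : G} (hx : x ∈ gr (-1)) : projNegOne gr hint x = x := by
  have h := hint.ofBijective_coeLinearMap_of_mem hx
  simp only [projNegOne, LinearMap.comp_apply, LinearEquiv.coe_toLinearMap,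
    Submodule.subtype_apply]
  rw [show (DirectSum.component ℝ ℤ (fun i => ↥(gr i)) (-1))
      ((LinearEquiv.ofBijective (DirectSum.coeLinearMap gr) hint).symm x)
      = (LinearEquiv.ofBijective (DirectSum.coeLinearMap gr) hint).symm x (-1) from rfl, h]

lemma projNegOne_of_mem_ne (gr : ℤ → Submodule ℝ G) (hint : DirectSum.IsInternal gr)
    {i : ℤ} (hi : i ≠ -1) {x : G} (hx : x ∈ gr i) : projNegOne gr hint x = 0 := by
  have h := hint.ofBijective_coeLinearMap_of_mem_ne hi hx
  simp only [projNegOne, LinearMap.comp_apply, LinearEquiv.coe_toLinearMap,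
    Submodule.subtype_apply]
  rw [show (DirectSum.component ℝ ℤ (fun i => ↥(gr i)) (-1))
      ((LinearEquiv.ofBijective (DirectSum.coeLinearMap gr) hint).symm x)
      = (LinearEquiv.ofBijective (DirectSum.coeLinearMap gr) hint).symm x (-1) from rfl, h]
  rfl

theorem degree_one_dual_cohomology
    (gr : ℤ → Submodule ℝ G)
    (hnonpos : ∀ i : ℤ, 0 < i → gr i = ⊥)
    (hbkt : ∀ i j : ℤ, ∀ x ∈ gr i, ∀ y ∈ gr j, ⁅x, y⁆ ∈ gr (i + j))
    (hint : DirectSum.IsInternal gr)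
    (hfund : ∀ i : ℤ, i < -1 → ∀ x ∈ gr i,
      x ∈ Submodule.span ℝ {z : G | ∃ u ∈ gr (-1), ∃ v ∈ gr (i + 1), z = ⁅u, v⁆}) :
    -- (a) surjectivity: every linear map `𝔤_{-1} → (𝔤_0)^*` (represented by `f`)
    -- extends, trivially on `𝔤_{≤ -2}`, to a closed degree-one cochain:
    (∀ f : G →ₗ[ℝ] (G →ₗ[ℝ] ℝ), (∀ x ∈ gr (-1), f x ∈ dualPiece gr 0) →
      ∃ γ : G →ₗ[ℝ] (G →ₗ[ℝ] ℝ),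
        (∀ i : ℤ, ∀ x ∈ gr i, γ x ∈ dualPiece gr (i + 1)) ∧
        (∀ x ∈ (⨆ i < (0 : ℤ), gr i), ∀ y ∈ (⨆ i < (0 : ℤ), gr i),
          γ ⁅x, y⁆ = coadAct x (γ y) - coadAct y (γ x)) ∧
        (∀ x ∈ gr (-1), γ x = f x) ∧
        (∀ i : ℤ, i ≤ -2 → ∀ x ∈ gr i, γ x = 0)) ∧
    -- (b) kernel identification: a closed degree-one cochain `γ` restricts on `𝔤_{-1}`
    -- to an element `β̂` of `B_1(𝔤)` (with `β ∈ (𝔤_{-1})^* = (𝔤^*)_1`) iff it is a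
    -- coboundary on all of `𝔤_-`:
    (∀ γ : G →ₗ[ℝ] (G →ₗ[ℝ] ℝ),
      (∀ i : ℤ, ∀ x ∈ gr i, γ x ∈ dualPiece gr (i + 1)) →
      (∀ x ∈ (⨆ i < (0 : ℤ), gr i), ∀ y ∈ (⨆ i < (0 : ℤ), gr i),
        γ ⁅x, y⁆ = coadAct x (γ y) - coadAct y (γ x)) →
      ((∃ β ∈ dualPiece gr 1, ∀ x ∈ gr (-1), γ x = coadAct x β) ↔
        (∃ β ∈ dualPiece gr 1, ∀ x ∈ (⨆ i < (0 : ℤ), gr i), γ x = coadAct x β))) := by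
  have memsup : ∀ j < (0:ℤ), ∀ w ∈ gr j, w ∈ (⨆ i < (0:ℤ), gr i) := by
    intro j hj w hw
    exact (le_iSup₂ (f := fun i (_ : i < (0:ℤ)) => gr i) j hj) hw
  constructor
  · -- part (a)
    intro f hf
    set π := projNegOne gr hint with hπ
    set γ := f ∘ₗ π with hγ
    have hres : ∀ x ∈ gr (-1), γ x = f x := by
      intro x hx
      simp only [hγ, hπ, LinearMap.comp_apply, projNegOne_of_mem_same gr hint hx]
    have hvan : ∀ i : ℤ, i ≠ -1 → ∀ x ∈ gr i, γ x = 0 := by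
      intro i hi x hx
      simp only [hγ, hπ, LinearMap.comp_apply, projNegOne_of_mem_ne gr hint hi hx, map_zero]
    have hdeg : ∀ i : ℤ, ∀ x ∈ gr i, γ x ∈ dualPiece gr (i + 1) := by
      intro i x hx
      by_cases hi : i = -1
      · subst hi
        rw [hres x hx]
        simpa using hf x hx
      · rw [hvan i hi x hx]
        exact zero_mem _
    refine ⟨γ, hdeg, ?_, hres, fun i hi x hx => hvan i (by omega) x hx⟩
    have hkey : ∀ i < (0:ℤ), ∀ x ∈ gr i, ∀ j < (0:ℤ), ∀ y ∈ gr j, defect γ x y = 0 := by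
      intro i hi x hx j hj y hy
      rw [defect_apply]
      have h1 : γ ⁅x, y⁆ = 0 :=
        hvan (i + j) (by omega) _ (hbkt i j x hx y hy)
      have h2 : coadAct x (γ y) = 0 :=
        coad_vanish gr hnonpos hbkt hint (by omega) hx (hdeg j y hy)
      have h3 : coadAct y (γ x) = 0 :=
        coad_vanish gr hnonpos hbkt hint (by omega) hy (hdeg i x hx)
      rw [h1, h2, h3]; simp
    intro x hx y hy
    have h := bilin_vanish gr (defect γ) hkey x hx y hy
    rw [defect_apply] at h
    exact sub_eq_zero.mp h
  · -- part (b)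
    intro γ hdeg hclosed
    constructor
    · rintro ⟨β, hβ, hres⟩
      refine ⟨β, hβ, ?_⟩
      let D : G →ₗ[ℝ] (G →ₗ[ℝ] ℝ) :=
        { toFun := fun x => coadAct x β
          map_add' := fun x x' => by ext z; simp only [coadAct_apply, add_lie, map_add, LinearMap.add_apply]; ring
          map_smul' := fun c x => by ext z; simp only [coadAct_apply, smul_lie, map_smul, LinearMap.smul_apply, RingHom.id_apply, smul_eq_mul]; ring }
      have hD : ∀ x : G, D x = coadAct x β := fun x => rfl
      -- cocycle property of D
      have hDcl : ∀ u v : G, D ⁅u, v⁆ = coadAct u (D v) - coadAct v (D u) := by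
        intro u v
        ext z
        simp only [hD, coadAct_apply, LinearMap.sub_apply, lie_lie, map_sub]
        ring
      -- γ - D vanishes on each gr i, i < 0, by induction
      have claim : ∀ n : ℕ, ∀ i : ℤ, i < 0 → -i ≤ (n : ℤ) + 1 →
          gr i ≤ LinearMap.ker (γ - D) := by
        intro n
        induction n with
        | zero =>
          intro i hi hle
          have : i = -1 := by omega
          subst this
          intro z hz
          rw [LinearMap.mem_ker, LinearMap.sub_apply, hres z hz, hD]
          simp
        | succ n ih =>
          intro i hi hle
          by_cases h1 : i = -1
          · subst h1
            intro z hz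
            rw [LinearMap.mem_ker, LinearMap.sub_apply, hres z hz, hD]
            simp
          · intro z hz
            have hz' := hfund i (by omega) z hz
            have hsub : Submodule.span ℝ {z : G | ∃ u ∈ gr (-1), ∃ v ∈ gr (i + 1), z = ⁅u, v⁆}
                ≤ LinearMap.ker (γ - D) := by
              rw [Submodule.span_le]
              rintro _ ⟨u, hu, v, hv, rfl⟩
              have hγuv : γ ⁅u, v⁆ = coadAct u (γ v) - coadAct v (γ u) :=
                hclosed u (memsup (-1) (by norm_num) u hu) v (memsup (i+1) (by omega) v hv)
              have hDv : (γ - D) v = 0 := ih (i + 1) (by omega) (by omega) hv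
              have hDu : (γ - D) u = 0 := ih (-1) (by norm_num) (by omega) hu
              rw [SetLike.mem_coe, LinearMap.mem_ker, LinearMap.sub_apply, hγuv, hDcl u v]
              have e1 : coadAct u (γ v) - coadAct u (D v) = coadAct u ((γ - D) v) := by
                rw [LinearMap.sub_apply, coadAct_sub]
              have e2 : coadAct v (γ u) - coadAct v (D u) = coadAct v ((γ - D) u) := by
                rw [LinearMap.sub_apply, coadAct_sub]
              calc coadAct u (γ v) - coadAct v (γ u) - (coadAct u (D v) - coadAct v (D u))
                  = (coadAct u (γ v) - coadAct u (D v)) - (coadAct v (γ u) - coadAct v (D u)) := by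
                    abel
                _ = coadAct u ((γ - D) v) - coadAct v ((γ - D) u) := by rw [e1, e2]
                _ = 0 := by rw [hDv, hDu, coadAct_zero, coadAct_zero, sub_zero]
            exact hsub hz'
      intro x hx
      have hle : (⨆ i < (0:ℤ), gr i) ≤ LinearMap.ker (γ - D) :=
        iSup₂_le fun i hi => claim (-i).toNat i hi (by omega)
      have := hle hx
      rw [LinearMap.mem_ker, LinearMap.sub_apply, sub_eq_zero] at this
      rw [this, hD]
    · rintro ⟨β, hβ, h⟩
      exact ⟨β, hβ, fun x hx => h x (memsup (-1) (by norm_num) x hx)⟩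
end
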